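/- Let B and D be random vectors of dimensions m and n, and W the Moore–Penrose inverse of Var(D). Then the adjusted expectation E_D(B) is the affine function of D closest to B in expected squared loss: for every real m×n matrix M and every a ∈ ℝ^m, Σ_i E[(B_i − (E_D(B))_i)²] ≤ Σ_i E[(B_i − a_i − Σ_j M_{ij}·D_j)²]. -/

import Mathlib

open MeasureTheory Matrix

variable {Ω : Type*}

/-- The covariance matrix of two random vectors `B` (dimension `m`) and `D` (dimension `n`):
the `(i,j)` entry is `E[Bᵢ·Dⱼ] − E[Bᵢ]·E[Dⱼ]`. -/
noncomputable def cov [MeasurableSpace Ω] (μ : Measure Ω) {m n : ℕ}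
    (B : Fin m → Ω → ℝ) (D : Fin n → Ω → ℝ) : Matrix (Fin m) (Fin n) ℝ :=
  Matrix.of fun i j =>
    (∫ ω, B i ω * D j ω ∂μ) - (∫ ω, B i ω ∂μ) * (∫ ω, D j ω ∂μ)

/-- `W` is a Moore–Penrose inverse of `V`. -/
def IsMoorePenrose {m n : ℕ} (V : Matrix (Fin m) (Fin n) ℝ)
    (W : Matrix (Fin n) (Fin m) ℝ) : Prop :=
  V * W * V = V ∧ W * V * W = W ∧ (V * W)ᵀ = V * W ∧ (W * V)ᵀ = W * V

/-- The adjusted expectation `E_D(B)` (computed with the matrix `W`, intended to be the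
Moore–Penrose inverse of `Var(D)`): the `i`-th component is
`E[Bᵢ] + Σ_j (Cov(B,D)·W)_{ij}·(Dⱼ − E[Dⱼ])`. -/
noncomputable def adjExp [MeasurableSpace Ω] (μ : Measure Ω) {m n : ℕ}
    (B : Fin m → Ω → ℝ) (D : Fin n → Ω → ℝ)
    (W : Matrix (Fin n) (Fin n) ℝ) : Fin m → Ω → ℝ :=
  fun i ω => (∫ ω', B i ω' ∂μ) + ∑ j, (cov μ B D * W) i j * (D j ω - ∫ ω', D j ω' ∂μ)

/-- The adjusted covariance `Cov_D(B,C) = Cov(B − E_D(B), C − E_D(C))`. -/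
noncomputable def adjCov [MeasurableSpace Ω] (μ : Measure Ω) {m p n : ℕ}
    (B : Fin m → Ω → ℝ) (C : Fin p → Ω → ℝ) (D : Fin n → Ω → ℝ)
    (W : Matrix (Fin n) (Fin n) ℝ) : Matrix (Fin m) (Fin p) ℝ :=
  cov μ (fun i ω => B i ω - adjExp μ B D W i ω) (fun j ω => C j ω - adjExp μ C D W j ω)

section Helpers
variable [MeasurableSpace Ω] {μ : Measure Ω}


lemma integrable_mul₂ {f g : Ω → ℝ} (hf : MemLp f 2 μ) (hg : MemLp g 2 μ) :
    Integrable (fun ω => f ω * g ω) μ := by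
  have hmeas : AEStronglyMeasurable (fun ω => f ω * g ω) μ :=
    hf.aestronglyMeasurable.mul hg.aestronglyMeasurable
  have hint : Integrable (fun ω => (f ω ^ 2 + g ω ^ 2) / 2) μ :=
    (hf.integrable_sq.add hg.integrable_sq).div_const 2
  refine hint.mono' hmeas (Filter.Eventually.of_forall fun ω => ?_)
  have h1 := sq_nonneg (|f ω| - |g ω|)
  have h2 : ‖f ω * g ω‖ = |f ω| * |g ω| := by rw [Real.norm_eq_abs, abs_mul]
  nlinarith [sq_abs (f ω), sq_abs (g ω)]

lemma integral_mul_sum {n : ℕ} {f : Ω → ℝ} (hf : MemLp f 2 μ)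
    {g : Fin n → Ω → ℝ} (hg : ∀ j, MemLp (g j) 2 μ) (q : Fin n → ℝ) :
    ∫ ω, f ω * ∑ j, q j * g j ω ∂μ = ∑ j, q j * ∫ ω, f ω * g j ω ∂μ := by
  have h : ∀ ω, f ω * ∑ j, q j * g j ω = ∑ j, q j * (f ω * g j ω) := by
    intro ω; rw [Finset.mul_sum]; exact Finset.sum_congr rfl fun j _ => by ring
  simp_rw [h]
  rw [integral_finset_sum _ fun j _ => (integrable_mul₂ hf (hg j)).const_mul _]
  exact Finset.sum_congr rfl fun j _ => integral_const_mul _ _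

lemma expand_sq [IsProbabilityMeasure μ] {f g : Ω → ℝ} (hf : MemLp f 2 μ) (hg : MemLp g 2 μ)
    (hf0 : ∫ ω, f ω ∂μ = 0) (hg0 : ∫ ω, g ω ∂μ = 0) (k : ℝ) :
    ∫ ω, (f ω - g ω - k) ^ 2 ∂μ =
      (∫ ω, f ω ^ 2 ∂μ) + (∫ ω, g ω ^ 2 ∂μ) - 2 * (∫ ω, f ω * g ω ∂μ) + k ^ 2 := by
  have h1 : ∀ ω, (f ω - g ω - k) ^ 2 =
      (f ω ^ 2 + g ω ^ 2 + k ^ 2) - 2 * (f ω * g ω) - (2 * k) * f ω + (2 * k) * g ω :=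
    fun ω => by ring
  simp_rw [h1]
  have i0 : Integrable (fun ω => f ω ^ 2 + g ω ^ 2) μ := hf.integrable_sq.add hg.integrable_sq
  have i1 : Integrable (fun ω => f ω ^ 2 + g ω ^ 2 + k ^ 2) μ := i0.add (integrable_const _)
  have i2 : Integrable (fun ω => 2 * (f ω * g ω)) μ := (integrable_mul₂ hf hg).const_mul 2
  have i3 : Integrable (fun ω => (2 * k) * f ω) μ := (hf.integrable one_le_two).const_mul _
  have i4 : Integrable (fun ω => (2 * k) * g ω) μ := (hg.integrable one_le_two).const_mul _
  have iA : Integrable (fun ω => f ω ^ 2 + g ω ^ 2 + k ^ 2 - 2 * (f ω * g ω)) μ := by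
    exact i1.sub i2
  have iB : Integrable (fun ω => f ω ^ 2 + g ω ^ 2 + k ^ 2 - 2 * (f ω * g ω) - 2 * k * f ω) μ := by
    exact iA.sub i3
  rw [integral_add iB i4, integral_sub iA i3, integral_sub i1 i2,
    integral_add i0 (integrable_const _), integral_add hf.integrable_sq hg.integrable_sq,
    integral_const_mul, integral_const_mul, integral_const_mul, hf0, hg0, integral_const]
  simp [measure_univ]
  ring

lemma cov_apply' [IsProbabilityMeasure μ] {f g : Ω → ℝ} (hf : MemLp f 2 μ) (hg : MemLp g 2 μ) :
    ∫ ω, (f ω - ∫ ω', f ω' ∂μ) * (g ω - ∫ ω', g ω' ∂μ) ∂μ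
      = (∫ ω, f ω * g ω ∂μ) - (∫ ω, f ω ∂μ) * (∫ ω, g ω ∂μ) := by
  have h1 : ∀ ω, (f ω - ∫ ω', f ω' ∂μ) * (g ω - ∫ ω', g ω' ∂μ)
      = f ω * g ω - (∫ ω', g ω' ∂μ) * f ω - (∫ ω', f ω' ∂μ) * g ω
        + (∫ ω', f ω' ∂μ) * (∫ ω', g ω' ∂μ) := fun ω => by ring
  simp_rw [h1]
  have i1 : Integrable (fun ω => f ω * g ω) μ := integrable_mul₂ hf hg
  have i2 : Integrable (fun ω => (∫ ω', g ω' ∂μ) * f ω) μ :=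
    (hf.integrable one_le_two).const_mul _
  have i3 : Integrable (fun ω => (∫ ω', f ω' ∂μ) * g ω) μ :=
    (hg.integrable one_le_two).const_mul _
  have iA : Integrable (fun ω => f ω * g ω - (∫ ω', g ω' ∂μ) * f ω) μ := by exact i1.sub i2
  have iB : Integrable
      (fun ω => f ω * g ω - (∫ ω', g ω' ∂μ) * f ω - (∫ ω', f ω' ∂μ) * g ω) μ := by
    exact iA.sub i3
  rw [integral_add iB (integrable_const _), integral_sub iA i3,
    integral_sub i1 i2, integral_const_mul, integral_const_mul, integral_const]
  simp [measure_univ]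
  ring

lemma key_ineq [IsProbabilityMeasure μ] {n : ℕ} {X : Ω → ℝ} {Dc : Fin n → Ω → ℝ}
    (hX : MemLp X 2 μ) (hDc : ∀ j, MemLp (Dc j) 2 μ)
    (hX0 : ∫ ω, X ω ∂μ = 0) (hDc0 : ∀ j, ∫ ω, Dc j ω ∂μ = 0)
    (p q : Fin n → ℝ) (k : ℝ)
    (hp : ∀ j, (∫ ω, X ω * Dc j ω ∂μ) = ∑ l, p l * ∫ ω, Dc l ω * Dc j ω ∂μ) :
    ∫ ω, (X ω - ∑ j, p j * Dc j ω) ^ 2 ∂μ ≤ ∫ ω, (X ω - ∑ j, q j * Dc j ω - k) ^ 2 ∂μ := by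
  set Sp : Ω → ℝ := fun ω => ∑ j, p j * Dc j ω with hSp
  set Sq : Ω → ℝ := fun ω => ∑ j, q j * Dc j ω with hSq
  have hSL2 : ∀ r : Fin n → ℝ, MemLp (fun ω => ∑ j, r j * Dc j ω) 2 μ := fun r =>
    memLp_finset_sum _ fun j _ => (hDc j).const_mul _
  have hS0 : ∀ r : Fin n → ℝ, ∫ ω, (∑ j, r j * Dc j ω) ∂μ = 0 := by
    intro r
    rw [integral_finset_sum _ fun j _ => ((hDc j).integrable one_le_two).const_mul _]
    simp only [integral_const_mul]
    simp [hDc0]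
  -- orthogonality: ∫ X * S_r = ∫ Sp * S_r
  have orth : ∀ r : Fin n → ℝ,
      ∫ ω, X ω * (∑ j, r j * Dc j ω) ∂μ = ∫ ω, Sp ω * (∑ j, r j * Dc j ω) ∂μ := by
    intro r
    rw [integral_mul_sum hX hDc r, integral_mul_sum (hSL2 p) hDc r]
    refine Finset.sum_congr rfl fun j _ => ?_
    rw [hp j]
    congr 1
    have hc : ∀ ω, Sp ω * Dc j ω = Dc j ω * Sp ω := fun ω => mul_comm _ _
    calc ∑ l, p l * ∫ ω, Dc l ω * Dc j ω ∂μ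
        = ∑ l, p l * ∫ ω, Dc j ω * Dc l ω ∂μ := by
          refine Finset.sum_congr rfl fun l _ => ?_
          congr 1
          exact integral_congr_ae (Filter.Eventually.of_forall fun ω => mul_comm _ _)
      _ = ∫ ω, Dc j ω * Sp ω ∂μ := (integral_mul_sum (hDc j) hDc p).symm
      _ = ∫ ω, Sp ω * Dc j ω ∂μ :=
          integral_congr_ae (Filter.Eventually.of_forall fun ω => mul_comm _ _)
  have E1 : ∫ ω, (X ω - Sp ω) ^ 2 ∂μ =
      (∫ ω, X ω ^ 2 ∂μ) + (∫ ω, Sp ω ^ 2 ∂μ) - 2 * (∫ ω, X ω * Sp ω ∂μ) := by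
    have := expand_sq hX (hSL2 p) hX0 (hS0 p) 0
    simpa using this
  have E2 : ∫ ω, (X ω - Sq ω - k) ^ 2 ∂μ =
      (∫ ω, X ω ^ 2 ∂μ) + (∫ ω, Sq ω ^ 2 ∂μ) - 2 * (∫ ω, X ω * Sq ω ∂μ) + k ^ 2 :=
    expand_sq hX (hSL2 q) hX0 (hS0 q) k
  have E3 : ∫ ω, (Sq ω - Sp ω) ^ 2 ∂μ =
      (∫ ω, Sq ω ^ 2 ∂μ) + (∫ ω, Sp ω ^ 2 ∂μ) - 2 * (∫ ω, Sq ω * Sp ω ∂μ) := by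
    have := expand_sq (hSL2 q) (hSL2 p) (hS0 q) (hS0 p) 0
    simpa using this
  have N : 0 ≤ ∫ ω, (Sq ω - Sp ω) ^ 2 ∂μ := integral_nonneg fun ω => sq_nonneg _
  have comm : ∫ ω, Sq ω * Sp ω ∂μ = ∫ ω, Sp ω * Sq ω ∂μ :=
    integral_congr_ae (Filter.Eventually.of_forall fun ω => mul_comm _ _)
  have sqeq : ∫ ω, X ω * Sp ω ∂μ = ∫ ω, Sp ω ^ 2 ∂μ := by
    rw [orth p]
    exact integral_congr_ae (Filter.Eventually.of_forall fun ω => (sq (Sp ω)).symm)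
  have oq := orth q
  have k2 : (0:ℝ) ≤ k ^ 2 := sq_nonneg k
  rw [E1, E2]
  rw [E3] at N
  rw [comm] at N
  linarith [oq, sqeq, N, k2]

lemma covWcov [IsProbabilityMeasure μ] {m n : ℕ}
    (B : Fin m → Ω → ℝ) (D : Fin n → Ω → ℝ)
    (hB : ∀ i, MemLp (B i) 2 μ)
    (hD : ∀ i, Measurable (D i) ∧ MemLp (D i) 2 μ)
    (W : Matrix (Fin n) (Fin n) ℝ) (h1 : cov μ D D * W * cov μ D D = cov μ D D) :
    cov μ B D * W * cov μ D D = cov μ B D := by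
  -- centered variables
  set Dc : Fin n → Ω → ℝ := fun j ω => D j ω - ∫ ω', D j ω' ∂μ with hDcdef
  have hDcL2 : ∀ j, MemLp (Dc j) 2 μ := fun j => ((hD j).2).sub (memLp_const _)
  have hDcMeas : ∀ j, Measurable (Dc j) := fun j => ((hD j).1).sub measurable_const
  have hV : ∀ l j, ∫ ω, Dc l ω * Dc j ω ∂μ = cov μ D D l j := by
    intro l j
    simp only [hDcdef]
    rw [cov_apply' (hD l).2 (hD j).2]
    rfl
  have hX : ∀ i, MemLp (fun ω => B i ω - ∫ ω', B i ω' ∂μ) 2 μ := fun i =>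
    (hB i).sub (memLp_const _)
  have hC : ∀ i j, ∫ ω, (B i ω - ∫ ω', B i ω' ∂μ) * Dc j ω ∂μ = cov μ B D i j := by
    intro i j
    simp only [hDcdef]
    rw [cov_apply' (hB i) (hD j).2]
    rfl
  ext i j
  -- the defect vector v
  set v : Fin n → ℝ := fun l => (W * cov μ D D) l j - (if l = j then 1 else 0) with hv
  have hVv : ∀ r, ∑ l, cov μ D D r l * v l = 0 := by
    intro r
    have h2 : (cov μ D D * (W * cov μ D D)) r j = cov μ D D r j := by
      rw [← Matrix.mul_assoc, h1]
    have h3 : (cov μ D D * (W * cov μ D D)) r j = ∑ l, cov μ D D r l * (W * cov μ D D) l j :=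
      Matrix.mul_apply
    simp only [hv, mul_sub, Finset.sum_sub_distrib, ← h3, h2, mul_ite, mul_one, mul_zero]
    simp
  -- g := ∑ v l * Dc l  is a.e. zero
  set g : Ω → ℝ := fun ω => ∑ l, v l * Dc l ω with hg
  have hgL2 : MemLp g 2 μ := memLp_finset_sum _ fun l _ => (hDcL2 l).const_mul _
  have hgg : ∫ ω, g ω * g ω ∂μ = 0 := by
    rw [integral_mul_sum hgL2 hDcL2 v]
    refine Finset.sum_eq_zero fun r _ => ?_
    have : ∫ ω, g ω * Dc r ω ∂μ = 0 := by
      have hcm : ∫ ω, g ω * Dc r ω ∂μ = ∫ ω, Dc r ω * g ω ∂μ :=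
        integral_congr_ae (Filter.Eventually.of_forall fun ω => mul_comm _ _)
      rw [hcm, integral_mul_sum (hDcL2 r) hDcL2 v]
      have : ∀ l, ∫ ω, Dc r ω * Dc l ω ∂μ = cov μ D D r l := fun l => hV r l
      calc ∑ l, v l * ∫ ω, Dc r ω * Dc l ω ∂μ = ∑ l, cov μ D D r l * v l := by
            refine Finset.sum_congr rfl fun l _ => ?_
            rw [this l]; ring
        _ = 0 := hVv r
    rw [this, mul_zero]
  have hg0 : ∀ᵐ ω ∂μ, g ω = 0 := by
    have hsq : ∫ ω, g ω ^ 2 ∂μ = 0 := by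
      rw [← hgg]
      exact integral_congr_ae (Filter.Eventually.of_forall fun ω => sq (g ω))
    have hint : Integrable (fun ω => g ω ^ 2) μ := hgL2.integrable_sq
    have := (integral_eq_zero_iff_of_nonneg (fun ω => sq_nonneg (g ω)) hint).mp hsq
    filter_upwards [this] with ω hω
    exact pow_eq_zero_iff two_ne_zero |>.mp hω
  -- conclude
  have key : ∑ l, cov μ B D i l * v l = 0 := by
    have hXg : ∫ ω, (B i ω - ∫ ω', B i ω' ∂μ) * g ω ∂μ = 0 := by
      have : ∀ᵐ ω ∂μ, (B i ω - ∫ ω', B i ω' ∂μ) * g ω = 0 := by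
        filter_upwards [hg0] with ω hω; rw [hω, mul_zero]
      rw [integral_congr_ae this, integral_zero]
    rw [integral_mul_sum (hX i) hDcL2 v] at hXg
    calc ∑ l, cov μ B D i l * v l
        = ∑ l, v l * ∫ ω, (B i ω - ∫ ω', B i ω' ∂μ) * Dc l ω ∂μ := by
          refine Finset.sum_congr rfl fun l _ => ?_
          rw [hC i l]; ring
      _ = 0 := hXg
  have expand : (cov μ B D * W * cov μ D D) i j - cov μ B D i j = ∑ l, cov μ B D i l * v l := by
    rw [Matrix.mul_assoc, Matrix.mul_apply]
    simp only [hv, mul_sub, Finset.sum_sub_distrib, mul_ite, mul_one, mul_zero]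
    simp
  have := expand.trans key
  linarith [this]

end Helpers

/-- the adjusted expectation `E_D(B)` is the affine function of `D` closest to
`B` in expected squared loss: for every matrix `M` and vector `a`,
`Σ_i E[(Bᵢ − (E_D(B))ᵢ)²] ≤ Σ_i E[(Bᵢ − aᵢ − Σ_j M_{ij}·Dⱼ)²]`. -/
theorem adjExp_is_best_affine [MeasurableSpace Ω] (μ : Measure Ω) [IsProbabilityMeasure μ]
    {m n : ℕ} (B : Fin m → Ω → ℝ) (D : Fin n → Ω → ℝ)
    (hB : ∀ i, Measurable (B i) ∧ MemLp (B i) 2 μ)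
    (hD : ∀ i, Measurable (D i) ∧ MemLp (D i) 2 μ)
    (W : Matrix (Fin n) (Fin n) ℝ) (hW : IsMoorePenrose (cov μ D D) W)
    (M : Matrix (Fin m) (Fin n) ℝ) (a : Fin m → ℝ) :
    (∑ i, ∫ ω, (B i ω - adjExp μ B D W i ω) ^ 2 ∂μ) ≤
      ∑ i, ∫ ω, (B i ω - a i - ∑ j, M i j * D j ω) ^ 2 ∂μ := by
  refine Finset.sum_le_sum fun i _ => ?_
  have hXL2 : MemLp (fun ω => B i ω - ∫ ω', B i ω' ∂μ) 2 μ := (hB i).2.sub (memLp_const _)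
  have hDcL2 : ∀ j, MemLp (fun ω => D j ω - ∫ ω', D j ω' ∂μ) 2 μ := fun j =>
    (hD j).2.sub (memLp_const _)
  have hX0 : ∫ ω, (B i ω - ∫ ω', B i ω' ∂μ) ∂μ = 0 := by
    rw [integral_sub ((hB i).2.integrable one_le_two) (integrable_const _), integral_const]
    simp [measure_univ]
  have hDc0 : ∀ j, ∫ ω, (D j ω - ∫ ω', D j ω' ∂μ) ∂μ = 0 := fun j => by
    rw [integral_sub ((hD j).2.integrable one_le_two) (integrable_const _), integral_const]
    simp [measure_univ]
  have hL : ∀ ω, B i ω - adjExp μ B D W i ω =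
      (B i ω - ∫ ω', B i ω' ∂μ) -
        ∑ j, (cov μ B D * W) i j * (D j ω - ∫ ω', D j ω' ∂μ) := by
    intro ω
    simp only [adjExp]
    ring
  have hR : ∀ ω, B i ω - a i - ∑ j, M i j * D j ω =
      (B i ω - ∫ ω', B i ω' ∂μ) - (∑ j, M i j * (D j ω - ∫ ω', D j ω' ∂μ)) -
        (a i + (∑ j, M i j * ∫ ω', D j ω' ∂μ) - ∫ ω', B i ω' ∂μ) := by
    intro ω
    simp only [mul_sub, Finset.sum_sub_distrib]
    ring
  simp only [hL, hR]
  refine key_ineq (X := fun ω => B i ω - ∫ ω', B i ω' ∂μ)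
    (Dc := fun j ω => D j ω - ∫ ω', D j ω' ∂μ) hXL2 hDcL2 hX0 hDc0
    (fun j => (cov μ B D * W) i j) (fun j => M i j)
    (a i + (∑ j, M i j * ∫ ω', D j ω' ∂μ) - ∫ ω', B i ω' ∂μ) ?_
  intro j
  have hM : cov μ B D * W * cov μ D D = cov μ B D :=
    covWcov B D (fun i => (hB i).2) hD W hW.1
  calc ∫ ω, (B i ω - ∫ ω', B i ω' ∂μ) * (D j ω - ∫ ω', D j ω' ∂μ) ∂μ
      = cov μ B D i j := by rw [cov_apply' (hB i).2 (hD j).2]; rfl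
    _ = (cov μ B D * W * cov μ D D) i j := by rw [hM]
    _ = ∑ l, (cov μ B D * W) i l * cov μ D D l j := Matrix.mul_apply
    _ = ∑ l, (cov μ B D * W) i l * ∫ ω, (D l ω - ∫ ω', D l ω' ∂μ) * (D j ω - ∫ ω', D j ω' ∂μ) ∂μ := by
        refine Finset.sum_congr rfl fun l _ => ?_
        rw [cov_apply' (hD l).2 (hD j).2]
        rfl
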